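/- Every rational solution (a, b) of a^2 + ab + b^2 = 1 is, up to swapping a and b, of the form a = (m^2 - n^2)/(m^2 + mn + n^2), b = (2mn + n^2)/(m^2 + mn + n^2) for some integers m, n. -/

import Mathlib

theorem stmt_2 (a b : ℚ) (h : a^2 + a*b + b^2 = 1) :
    ∃ m n : ℤ,
      (a = ((m:ℚ)^2 - n^2) / ((m:ℚ)^2 + m*n + n^2) ∧
       b = (2*(m:ℚ)*n + n^2) / ((m:ℚ)^2 + m*n + n^2)) ∨
      (b = ((m:ℚ)^2 - n^2) / ((m:ℚ)^2 + m*n + n^2) ∧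
       a = (2*(m:ℚ)*n + n^2) / ((m:ℚ)^2 + m*n + n^2)) := by
  by_cases ha : a = -1
  · subst ha
    have hb : b * (b - 1) = 0 := by nlinarith [h]
    rcases mul_eq_zero.1 hb with hb | hb
    · exact ⟨1, -2, Or.inl ⟨by norm_num, by norm_num [hb]⟩⟩
    · have hb1 : b = 1 := by linarith [sub_eq_zero.1 hb]
      exact ⟨-2, 1, Or.inr ⟨by norm_num [hb1], by norm_num⟩⟩
  · have ha' : a + 1 ≠ 0 := by intro h0; apply ha; linarith
    set t : ℚ := b / (a + 1) with htdef
    have hMpos : (0:ℚ) < (t.den : ℚ) := by exact_mod_cast t.pos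
    have hM : ((t.den : ℚ)) ≠ 0 := ne_of_gt hMpos
    have hN : (t.num : ℚ) = t * t.den := by
      rw [Rat.mul_den_eq_num]
    have hD : ((t.den:ℚ))^2 + (t.den:ℚ) * (t.num:ℚ) + (t.num:ℚ)^2 ≠ 0 := by
      intro h0
      nlinarith [sq_nonneg (2*(t.den:ℚ) + (t.num:ℚ)), sq_nonneg ((t.den:ℚ) + (t.num:ℚ)),
        sq_nonneg ((t.num:ℚ)), mul_pos hMpos hMpos]
    have keya : a * (1 + t + t^2) = 1 - t^2 := by
      rw [htdef]
      field_simp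
      linear_combination (a + 1) * h
    have keyb : b * (1 + t + t^2) = 2*t + t^2 := by
      rw [htdef]
      field_simp
      linear_combination b * h
    refine ⟨t.den, t.num, Or.inl ⟨?_, ?_⟩⟩
    · rw [eq_div_iff (by push_cast at hD ⊢; exact hD)]
      push_cast
      rw [hN]
      linear_combination ((t.den:ℚ))^2 * keya
    · rw [eq_div_iff (by push_cast at hD ⊢; exact hD)]
      push_cast
      rw [hN]
      linear_combination ((t.den:ℚ))^2 * keyb
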